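/- For η > 0 and any natural number k, the maximum modulus of the Chebyshev polynomial T_k over the complex disk {z : |z| ≤ η} is at most T_k(√(1+η²)), which in turn is at most (η + √(1+η²))^k. -/

import Mathlib

private lemma sub_inv_mono {a b : ℝ} (_ha : 0 < a) (hb : 0 < b)
    (h : a - a⁻¹ ≤ b - b⁻¹) : a ≤ b := by
  by_contra hab
  push_neg at hab
  have h1 : a⁻¹ < b⁻¹ := by gcongr
  linarith

private lemma add_inv_mono {a b : ℝ} (ha : 1 ≤ a) (hab : a ≤ b) :
    a + a⁻¹ ≤ b + b⁻¹ := by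
  have ha0 : 0 < a := by linarith
  have hb0 : 0 < b := by linarith
  have h1 : a * a⁻¹ = 1 := mul_inv_cancel₀ ha0.ne'
  have h2 : b * b⁻¹ = 1 := mul_inv_cancel₀ hb0.ne'
  have h3 : 0 < a⁻¹ := by positivity
  have h4 : 0 < b⁻¹ := by positivity
  nlinarith [mul_pos h3 h4, mul_le_mul_of_nonneg_left hab h4.le]

private lemma T_real_cosh_aux (t : ℝ) (n : ℤ) :
    (Polynomial.Chebyshev.T ℝ n).eval (Real.cosh t) = Real.cosh (n * t) := by
  apply Complex.ofReal_injective
  rw [Polynomial.Chebyshev.complex_ofReal_eval_T, Complex.ofReal_cosh, Complex.ofReal_cosh,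
    ← Complex.cos_mul_I, Polynomial.Chebyshev.T_complex_cos, ← Complex.cos_mul_I]
  push_cast
  ring

theorem chebyshev_disk_bound (η : ℝ) (hη : 0 < η) (k : ℕ) :
    (∀ z : ℂ, ‖z‖ ≤ η →
      ‖(Polynomial.Chebyshev.T ℂ k).eval z‖ ≤
        (Polynomial.Chebyshev.T ℝ k).eval (Real.sqrt (1 + η ^ 2))) ∧
    (Polynomial.Chebyshev.T ℝ k).eval (Real.sqrt (1 + η ^ 2)) ≤
      (η + Real.sqrt (1 + η ^ 2)) ^ k := by
  set s := Real.sqrt (1 + η ^ 2) with hs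
  have hs2 : s ^ 2 = 1 + η ^ 2 := Real.sq_sqrt (by positivity)
  have hs0 : 0 ≤ s := Real.sqrt_nonneg _
  have hs1 : 1 ≤ s := by nlinarith
  set ρ : ℝ := η + s with hρ
  have hρ1 : 1 < ρ := by simp only [hρ]; linarith
  have hρinv : ρ⁻¹ = s - η := by
    have h : ρ * (s - η) = 1 := by simp only [hρ]; nlinarith
    field_simp [show ρ ≠ 0 by positivity] at h ⊢
    linarith [h]
  -- value of T at s
  have hT : (Polynomial.Chebyshev.T ℝ k).eval s = (ρ ^ k + ρ⁻¹ ^ k) / 2 := by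
    have h1 : Real.cosh (Real.arsinh η) = s := Real.cosh_arsinh η
    have h2 : Real.exp (Real.arsinh η) = ρ := Real.exp_arsinh η
    have := T_real_cosh_aux (Real.arsinh η) k
    rw [h1] at this
    rw [this, Real.cosh_eq]
    have e1 : Real.exp (((k : ℤ) : ℝ) * Real.arsinh η) = ρ ^ k := by
      push_cast; rw [Real.exp_nat_mul, h2]
    have e2 : Real.exp (-(((k : ℤ) : ℝ) * Real.arsinh η)) = ρ⁻¹ ^ k := by
      rw [Real.exp_neg, e1, inv_pow]
    rw [e1, e2]
  have hρk1 : 1 ≤ ρ ^ k := one_le_pow₀ hρ1.le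
  constructor
  · intro z hz
    obtain ⟨θ, rfl⟩ := Complex.cos_surjective z
    rw [Polynomial.Chebyshev.T_complex_cos, hT]
    set r : ℝ := ‖Complex.exp (θ * Complex.I)‖ with hr
    have hr0 : 0 < r := norm_pos_iff.mpr (Complex.exp_ne_zero _)
    have hrinv : ‖Complex.exp (-(θ * Complex.I))‖ = r⁻¹ := by
      rw [Complex.exp_neg, norm_inv]
    -- bound on |cos (k θ)|
    have hcosk : ‖Complex.cos ((k : ℤ) * θ)‖ ≤ (r ^ k + r⁻¹ ^ k) / 2 := by
      rw [Complex.cos]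
      have e1 : ((k : ℤ) : ℂ) * θ * Complex.I = (k : ℕ) * (θ * Complex.I) := by push_cast; ring
      have e2 : -(((k : ℤ) : ℂ) * θ) * Complex.I = (k : ℕ) * (-(θ * Complex.I)) := by
        push_cast; ring
      rw [e1, e2, Complex.exp_nat_mul, Complex.exp_nat_mul]
      calc ‖(Complex.exp (θ * Complex.I) ^ k +
              Complex.exp (-(θ * Complex.I)) ^ k) / 2‖
          ≤ (‖Complex.exp (θ * Complex.I) ^ k‖ +
              ‖Complex.exp (-(θ * Complex.I)) ^ k‖) / 2 := by
            rw [norm_div]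
            simp only [Complex.norm_two]
            gcongr
            exact norm_add_le _ _
        _ = (r ^ k + r⁻¹ ^ k) / 2 := by rw [norm_pow, norm_pow, hrinv]
    -- |r - r⁻¹| ≤ 2η
    have hsub : |r - r⁻¹| ≤ 2 * η := by
      have h1 : |r - r⁻¹| ≤ ‖Complex.exp (θ * Complex.I) -
          (-Complex.exp (-(θ * Complex.I)))‖ := by
        have h0 := abs_norm_sub_norm_le (Complex.exp (θ * Complex.I))
          (-Complex.exp (-(θ * Complex.I)))
        rwa [norm_neg, hrinv] at h0
      have h2 : Complex.exp (θ * Complex.I) - (-Complex.exp (-(θ * Complex.I))) =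
          2 * Complex.cos θ := by rw [Complex.cos]; ring
      rw [h2, norm_mul, Complex.norm_two] at h1
      linarith
    set R : ℝ := max r r⁻¹ with hR
    have hR1 : 1 ≤ R := by
      rcases le_total r 1 with h | h
      · exact le_max_of_le_right (by rw [one_le_inv_iff₀]; exact ⟨hr0, h⟩)
      · exact le_max_of_le_left h
    have hRinv : R⁻¹ = min r r⁻¹ := by
      rcases le_total r r⁻¹ with h | h
      · rw [hR, max_eq_right h, min_eq_left h, inv_inv]
      · rw [hR, max_eq_left h, min_eq_right h]
    have hRsum : R ^ k + R⁻¹ ^ k = r ^ k + r⁻¹ ^ k := by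
      rcases le_total r r⁻¹ with h | h
      · rw [hRinv, hR, max_eq_right h, min_eq_left h]; ring
      · rw [hRinv, hR, max_eq_left h, min_eq_right h]
    have hRle : R ≤ ρ := by
      apply sub_inv_mono (by linarith) (by linarith)
      have : R - R⁻¹ = |r - r⁻¹| := by
        rw [hRinv]
        rcases le_total r r⁻¹ with h | h
        · rw [hR, max_eq_right h, min_eq_left h, abs_of_nonpos (by linarith)]; ring
        · rw [hR, max_eq_left h, min_eq_right h, abs_of_nonneg (by linarith)]
      rw [this, hρinv]
      calc |r - r⁻¹| ≤ 2 * η := hsub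
        _ = ρ - (s - η) := by simp only [hρ]; ring
    calc ‖Complex.cos ((k : ℤ) * θ)‖ ≤ (r ^ k + r⁻¹ ^ k) / 2 := hcosk
      _ = (R ^ k + (R ^ k)⁻¹) / 2 := by rw [← hRsum, inv_pow]
      _ ≤ (ρ ^ k + (ρ ^ k)⁻¹) / 2 := by
          have := add_inv_mono (one_le_pow₀ hR1) (pow_le_pow_left₀ (by linarith) hRle k)
          linarith
      _ = (ρ ^ k + ρ⁻¹ ^ k) / 2 := by rw [inv_pow]
  · rw [hT]
    have : ρ⁻¹ ^ k ≤ 1 := pow_le_one₀ (by positivity) (inv_le_one_of_one_le₀ hρ1.le)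
    have : ρ⁻¹ ^ k ≤ ρ ^ k := le_trans this hρk1
    linarith
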